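/- Let A be an n×n real symmetric matrix normalized so that max_{i,j}|a_{ij}| = 1, and suppose that at each elimination step all entries of the computed unit lower triangular factor satisfy |L_{ij}| ≤ √2. Then the entries of the k-th Schur complement A^{(k)} satisfy max_{i,j}|a^{(k)}_{ij}| ≤ 1 + 2∑_{i=1}^{k−1}|d_i|, where d₁,…,d_{k−1} are the pivots used in the first k−1 steps. -/
import Mathlib


open Matrix Real

theorem stmt_13 (n : ℕ) (A : Matrix (Fin n) (Fin n) ℝ)
    (hAsymm : Aᵀ = A)
    (hAnorm : ∀ i j, |A i j| ≤ 1)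
    (L : Fin n → ℕ → ℝ) (hL : ∀ i mm, |L i mm| ≤ Real.sqrt 2)
    (d : ℕ → ℝ) (k : ℕ) (hk : 1 ≤ k) :
    ∀ i j : Fin n,
      |A i j - ∑ mm ∈ Finset.range (k - 1), L i mm * d mm * L j mm| ≤
        1 + 2 * ∑ mm ∈ Finset.range (k - 1), |d mm| := by
  intro i j
  calc |A i j - ∑ mm ∈ Finset.range (k - 1), L i mm * d mm * L j mm|
      ≤ |A i j| + |∑ mm ∈ Finset.range (k - 1), L i mm * d mm * L j mm| :=
        abs_sub _ _
    _ ≤ 1 + 2 * ∑ mm ∈ Finset.range (k - 1), |d mm| := by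
        gcongr
        · exact hAnorm i j
        calc |∑ mm ∈ Finset.range (k - 1), L i mm * d mm * L j mm|
            ≤ ∑ mm ∈ Finset.range (k - 1), |L i mm * d mm * L j mm| :=
              Finset.abs_sum_le_sum_abs _ _
          _ ≤ ∑ mm ∈ Finset.range (k - 1), 2 * |d mm| := by
              apply Finset.sum_le_sum
              intro m _
              rw [abs_mul, abs_mul]
              have h2 : (0:ℝ) ≤ Real.sqrt 2 := Real.sqrt_nonneg 2
              calc |L i m| * |d m| * |L j m| ≤ Real.sqrt 2 * |d m| * Real.sqrt 2 := by
                    gcongr <;> [exact hL i m; exact hL j m]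
                _ = 2 * |d m| := by
                    rw [mul_comm (Real.sqrt 2 * |d m|)]
                    rw [← mul_assoc, Real.mul_self_sqrt (by norm_num)]
          _ = 2 * ∑ mm ∈ Finset.range (k - 1), |d mm| := by
              rw [Finset.mul_sum]
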